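/- arXiv:1502.04076 — 3 statements merged into one kernel-verified Lean document; each statement's English description precedes it below -/
import Mathlib

section
/- Define Par(n,k) ∈ ZMod 2 by the recurrence Par(n,k) = k·Par(n-1,k) + Par(n-1,k-1) + S(n-2,k-2) (mod 2), with initial conditions Par(n,2) = 0 for all n, and Par(n,n-1) = 1 if n ≡ 0 (mod 4) and 0 otherwise. Then for all n ≥ 4 and 2 ≤ k < n: Par(n,k) = 0 if n is odd, and Par(n,k) ≡ S(n-2,k-2) (mod 2) if n is even. -/
def stirling : ℕ → ℕ → ℕ
  | 0, 0 => 1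
  | 0, _ + 1 => 0
  | _ + 1, 0 => 0
  | n + 1, k + 1 => (k + 1) * stirling n (k + 1) + stirling n k

lemma st_gt : ∀ m k, m < k → stirling m k = 0 := by
  intro m
  induction m with
  | zero => intro k hk; match k, hk with | k+1, _ => rfl
  | succ m ih =>
    intro k hk
    match k, hk with
    | j+1, hk =>
      show (j + 1) * stirling m (j + 1) + stirling m j = 0
      rw [ih (j+1) (by omega), ih j (by omega)]; ring

lemma st_diag : ∀ m, stirling m m = 1 := by
  intro m; induction m with
  | zero => rfl
  | succ m ih => simp [stirling, ih, st_gt m (m+1) (by omega)]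

lemma st_sub1 : ∀ m, stirling (m+1) m % 2 = if m % 4 = 1 ∨ m % 4 = 2 then 1 else 0 := by
  intro m; induction m with
  | zero => rfl
  | succ m ih =>
    have h : stirling (m+2) (m+1) = (m+1) * stirling (m+1) (m+1) + stirling (m+1) m := rfl
    rw [h, st_diag]
    split_ifs at * <;> omega

lemma st_zero : ∀ m, stirling (m+1) 0 = 0 := fun _ => rfl

theorem par_formula (Par : ℕ → ℕ → ZMod 2)
    (hrec : ∀ n k : ℕ, 4 ≤ n → 3 ≤ k → k < n →
      Par n k = (k : ZMod 2) * Par (n - 1) k + Par (n - 1) (k - 1)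
        + (stirling (n - 2) (k - 2) : ZMod 2))
    (h2 : ∀ n : ℕ, Par n 2 = 0)
    (hinit : ∀ n : ℕ, Par n (n - 1) = if n % 4 = 0 then 1 else 0) :
    ∀ n k : ℕ, 4 ≤ n → 2 ≤ k → k < n →
      (Odd n → Par n k = 0) ∧
      (Even n → Par n k = (stirling (n - 2) (k - 2) : ZMod 2)) := by
  intro n
  induction n using Nat.strong_induction_on with
  | _ n ih =>
  intro k hn4 hk2 hkn
  by_cases hk2' : k = 2
  · subst hk2'
    refine ⟨fun _ => h2 n, fun _ => ?_⟩
    rw [h2, show n - 2 = (n - 3) + 1 by omega, st_zero]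
    norm_num
  by_cases hkn' : k = n - 1
  · subst hkn'
    rw [hinit n]
    constructor
    · intro hodd
      rw [if_neg]
      have := Nat.odd_iff.mp hodd
      omega
    · intro heven
      have he := Nat.even_iff.mp heven
      rw [show n - 2 = (n - 3) + 1 by omega]
      rw [show n - 1 - 2 = n - 3 by omega]
      rw [← ZMod.natCast_mod _ 2, st_sub1 (n - 3)]
      split_ifs <;> simp_all <;> omega
  -- middle case: 3 ≤ k ≤ n - 2
  have h3 : 3 ≤ k := by omega
  have hlt : k < n - 1 := by omega
  have hn5 : 5 ≤ n := by omega
  have hrec' := hrec n k hn4 h3 hkn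
  have ihk := ih (n - 1) (by omega) k (by omega) hk2 hlt
  have ihk1 := ih (n - 1) (by omega) (k - 1) (by omega) (by omega) (by omega)
  constructor
  · intro hodd
    have hne : Even (n - 1) := by
      rw [Nat.even_iff]; have := Nat.odd_iff.mp hodd; omega
    rw [hrec', ihk.2 hne, ihk1.2 hne]
    rw [show n - 1 - 2 = n - 3 by omega, show k - 1 - 2 = k - 3 by omega,
        show n - 2 = (n - 3) + 1 by omega]
    have hst : stirling ((n - 3) + 1) (k - 2) =
        (k - 2) * stirling (n - 3) (k - 2) + stirling (n - 3) (k - 3) := by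
      rw [show k - 2 = (k - 3) + 1 by omega]
      rfl
    rw [hst]
    push_cast
    have hcast : ((k - 2 : ℕ) : ZMod 2) = (k : ZMod 2) := by
      have h : k - 2 + 2 = k := by omega
      calc ((k - 2 : ℕ) : ZMod 2) = ((k - 2 : ℕ) : ZMod 2) + ((2 : ℕ) : ZMod 2) := by
            rw [show ((2 : ℕ) : ZMod 2) = 0 by decide]; ring
        _ = ((k - 2 + 2 : ℕ) : ZMod 2) := by push_cast; ring
        _ = (k : ZMod 2) := by rw [h]
    rw [hcast]
    have hx : ∀ x : ZMod 2, x + x = 0 := by decide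
    linear_combination hx ((k : ZMod 2) * (stirling (n - 3) (k - 2) : ZMod 2)
      + (stirling (n - 3) (k - 3) : ZMod 2))
  · intro heven
    have hno : Odd (n - 1) := by
      rw [Nat.odd_iff]; have := Nat.even_iff.mp heven; omega
    rw [hrec', ihk.1 hno, ihk1.1 hno]
    ring
end

section
/- For n balls thrown independently and uniformly into k ≥ 3 boxes, the probability that some two boxes receive the same number of balls is at most C(k,2) · ((k-2)/k)^n · ∑_{j=0}^{⌊n/2⌋} C(n,j)·C(n-j,j)/(k-2)^(2j). -/
open Finset

lemma fiber_count {n k : ℕ} (hk : 3 ≤ k) (i j : Fin k) (hij : i ≠ j) (A B : Finset (Fin n)) :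
    (univ.filter fun f : Fin n → Fin k =>
      univ.filter (fun x => f x = i) = A ∧ univ.filter (fun x => f x = j) = B).card
      ≤ (k-2) ^ (n - (A.card + B.card)) := by
  classical
  by_cases hAB : Disjoint A B
  · set C : Finset (Fin n) := (A ∪ B)ᶜ with hC
    have hcard2 : (({i, j} : Finset (Fin k))).card = 2 := by
      rw [card_insert_of_notMem (by simp [hij]), card_singleton]
    have hcard : 0 < (univ \ ({i, j} : Finset (Fin k))).card := by
      rw [card_sdiff_of_subset (subset_univ _), card_univ, Fintype.card_fin, hcard2]; omega
    obtain ⟨c, hc⟩ := Finset.card_pos.mp hcard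
    have hc' : c ≠ i ∧ c ≠ j := by simpa [not_or] using (mem_sdiff.mp hc).2
    have hmemA : ∀ x, x ∈ A ∨ x ∈ B ∨ x ∈ C := by
      intro x; by_cases h : x ∈ A ∪ B
      · rcases mem_union.mp h with h | h; exacts [Or.inl h, Or.inr (Or.inl h)]
      · exact Or.inr (Or.inr (mem_compl.mpr h))
    have key : ∀ f : Fin n → Fin k,
        (univ.filter (fun x => f x = i) = A ∧ univ.filter (fun x => f x = j) = B) →
        ∀ x : C, f x ≠ i ∧ f x ≠ j := by
      rintro f ⟨hA, hB⟩ ⟨x, hx⟩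
      have hx' := mem_compl.mp hx
      constructor
      · intro h; exact hx' (mem_union_left _ (hA ▸ mem_filter.mpr ⟨mem_univ _, h⟩))
      · intro h; exact hx' (mem_union_right _ (hB ▸ mem_filter.mpr ⟨mem_univ _, h⟩))
    have : (univ.filter fun f : Fin n → Fin k =>
        univ.filter (fun x => f x = i) = A ∧ univ.filter (fun x => f x = j) = B).card
        ≤ (univ : Finset (C → {c : Fin k // c ≠ i ∧ c ≠ j})).card := by
      apply Finset.card_le_card_of_injOn
        (fun f x => if hf : univ.filter (fun y => f y = i) = A ∧ univ.filter (fun y => f y = j) = B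
          then ⟨f x, key f hf x⟩ else ⟨c, hc'⟩)
      · intro f _; exact mem_univ _
      · intro f hf g hg hfg
        simp only [coe_filter, Set.mem_setOf_eq, mem_univ, true_and] at hf hg
        funext x
        rcases hmemA x with hx | hx | hx
        · have hxf := hx; rw [← hf.1] at hxf
          have hxg := hx; rw [← hg.1] at hxg
          rw [(mem_filter.mp hxf).2, (mem_filter.mp hxg).2]
        · have hxf := hx; rw [← hf.2] at hxf
          have hxg := hx; rw [← hg.2] at hxg
          rw [(mem_filter.mp hxf).2, (mem_filter.mp hxg).2]
        · have := congrFun hfg ⟨x, hx⟩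
          simp only [dif_pos hf, dif_pos hg, Subtype.mk.injEq] at this
          exact this
    refine this.trans ?_
    rw [Finset.card_univ, Fintype.card_fun]
    have h1 : Fintype.card {c : Fin k // c ≠ i ∧ c ≠ j} = k - 2 := by
      rw [Fintype.card_subtype]
      have heq : (univ.filter fun c : Fin k => c ≠ i ∧ c ≠ j) = univ \ {i, j} := by
        ext c; simp [not_or]
      rw [heq, card_sdiff_of_subset (subset_univ _), card_univ, Fintype.card_fin, hcard2]
    have h2 : Fintype.card C = n - (A.card + B.card) := by
      rw [Fintype.card_coe, hC, card_compl, card_union_of_disjoint hAB, Fintype.card_fin]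
    rw [h1, h2]
  · convert Nat.zero_le _
    rw [Finset.card_eq_zero, Finset.filter_eq_empty_iff]
    rintro f - ⟨hA, hB⟩
    apply hAB
    rw [← hA, ← hB, Finset.disjoint_filter]
    rintro x - hxi hxj
    exact hij (hxi ▸ hxj)

lemma pair_count {n k : ℕ} (hk : 3 ≤ k) (i j : Fin k) (hij : i ≠ j) :
    (univ.filter fun f : Fin n → Fin k =>
      (univ.filter (fun x => f x = i)).card = (univ.filter (fun x => f x = j)).card).card
      ≤ ∑ m ∈ Finset.range (n/2+1), n.choose m * (n-m).choose m * (k-2)^(n-2*m) := by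
  classical
  set S := univ.filter fun f : Fin n → Fin k =>
      (univ.filter (fun x => f x = i)).card = (univ.filter (fun x => f x = j)).card with hS
  set T : Finset (Finset (Fin n) × Finset (Fin n)) :=
    (univ.powerset ×ˢ univ.powerset).filter (fun p => p.1.card = p.2.card ∧ Disjoint p.1 p.2)
    with hT
  set φ : (Fin n → Fin k) → Finset (Fin n) × Finset (Fin n) :=
    fun f => (univ.filter (fun x => f x = i), univ.filter (fun x => f x = j)) with hφ
  have hmaps : ∀ f ∈ S, φ f ∈ T := by
    intro f hf
    simp only [hS, mem_filter, mem_univ, true_and] at hf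
    simp only [hT, mem_filter, mem_product, mem_powerset]
    refine ⟨⟨subset_univ _, subset_univ _⟩, hf, ?_⟩
    rw [Finset.disjoint_filter]
    rintro x - hxi hxj
    exact hij (hxi ▸ hxj)
  have h1 : S.card = ∑ p ∈ T, (S.filter (fun f => φ f = p)).card :=
    Finset.card_eq_sum_card_fiberwise hmaps
  have h2 : ∀ p ∈ T, (S.filter (fun f => φ f = p)).card ≤ (k-2)^(n - 2 * p.1.card) := by
    intro p hp
    simp only [hT, mem_filter, mem_product, mem_powerset] at hp
    have hsub : S.filter (fun f => φ f = p) ⊆ univ.filter fun f : Fin n → Fin k =>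
        univ.filter (fun x => f x = i) = p.1 ∧ univ.filter (fun x => f x = j) = p.2 := by
      intro f hf
      simp only [mem_filter, hφ, Prod.ext_iff] at hf
      simp only [mem_filter, mem_univ, true_and]
      exact hf.2
    calc (S.filter (fun f => φ f = p)).card ≤ _ := Finset.card_le_card hsub
      _ ≤ (k-2) ^ (n - (p.1.card + p.2.card)) := fiber_count hk i j hij p.1 p.2
      _ = (k-2) ^ (n - 2 * p.1.card) := by rw [← hp.2.1]; ring_nf
  have h3 : S.card ≤ ∑ p ∈ T, (k-2)^(n - 2 * p.1.card) := h1 ▸ Finset.sum_le_sum h2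
  -- group by p.1.card
  have h4 : ∑ p ∈ T, (k-2)^(n - 2 * p.1.card)
      = ∑ m ∈ Finset.range (n+1), ∑ p ∈ T.filter (fun p => p.1.card = m),
          (k-2)^(n - 2 * p.1.card) := by
    rw [Finset.sum_fiberwise_of_maps_to]
    intro p hp
    simp only [hT, mem_filter, mem_product, mem_powerset] at hp
    rw [Finset.mem_range]
    have := Finset.card_le_card hp.1.1
    simp only [card_univ, Fintype.card_fin] at this
    omega
  have h5 : ∀ m, (T.filter (fun p => p.1.card = m)).card
      = n.choose m * (n-m).choose m := by
    intro m
    rw [Finset.card_eq_sum_card_fiberwise (f := fun p => p.1)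
      (t := Finset.powersetCard m univ) ?_]
    · have hfib : ∀ A ∈ Finset.powersetCard m (univ : Finset (Fin n)),
          ((T.filter (fun p => p.1.card = m)).filter (fun p => p.1 = A))
            = {A} ×ˢ Finset.powersetCard m Aᶜ := by
        intro A hA
        rw [Finset.mem_powersetCard_univ] at hA
        ext p
        simp only [hT, mem_filter, mem_product, mem_powerset, mem_singleton,
          Finset.mem_powersetCard]
        constructor
        · intro h
          obtain ⟨⟨⟨-, hcard, hdisj⟩, hm⟩, hPA⟩ := h
          subst hPA
          refine ⟨rfl, ?_, by omega⟩
          intro x hx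
          rw [Finset.mem_compl]
          exact Finset.disjoint_right.mp hdisj hx
        · rintro ⟨hPA, hsub, hcard⟩
          have hc1 : p.1.card = m := by rw [hPA, hA]
          refine ⟨⟨⟨⟨subset_univ _, subset_univ _⟩, by omega, ?_⟩, by omega⟩, hPA⟩
          rw [hPA, Finset.disjoint_right]
          intro x hx
          exact Finset.mem_compl.mp (hsub hx)
      calc ∑ A ∈ Finset.powersetCard m (univ : Finset (Fin n)),
            ((T.filter (fun p => p.1.card = m)).filter (fun p => p.1 = A)).card
          = ∑ A ∈ Finset.powersetCard m (univ : Finset (Fin n)),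
            ({A} ×ˢ Finset.powersetCard m Aᶜ).card := by
            exact Finset.sum_congr rfl (fun A hA => by rw [hfib A hA])
        _ = ∑ A ∈ Finset.powersetCard m (univ : Finset (Fin n)), (n-m).choose m := by
            refine Finset.sum_congr rfl (fun A hA => ?_)
            rw [Finset.mem_powersetCard_univ] at hA
            rw [Finset.card_product, Finset.card_singleton, one_mul,
              Finset.card_powersetCard, Finset.card_compl, Fintype.card_fin, hA]
        _ = n.choose m * (n-m).choose m := by
            rw [Finset.sum_const, Finset.card_powersetCard, card_univ, Fintype.card_fin,
              smul_eq_mul]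
    · intro p hp
      rw [Finset.mem_coe, Finset.mem_powersetCard_univ]
      exact (Finset.mem_filter.mp (Finset.mem_coe.mp hp)).2
  have h6 : ∑ p ∈ T, (k-2)^(n - 2 * p.1.card)
      = ∑ m ∈ Finset.range (n+1), n.choose m * (n-m).choose m * (k-2)^(n-2*m) := by
    rw [h4]
    refine Finset.sum_congr rfl (fun m _ => ?_)
    rw [← h5 m]
    have e : ∑ p ∈ T.filter (fun p => p.1.card = m), (k-2)^(n - 2 * p.1.card)
        = ∑ p ∈ T.filter (fun p => p.1.card = m), (k-2)^(n-2*m) :=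
      Finset.sum_congr rfl (fun p hp => by rw [(Finset.mem_filter.mp hp).2])
    rw [e, Finset.sum_const, smul_eq_mul]
  have h7 : ∑ m ∈ Finset.range (n+1), n.choose m * (n-m).choose m * (k-2)^(n-2*m)
      = ∑ m ∈ Finset.range (n/2+1), n.choose m * (n-m).choose m * (k-2)^(n-2*m) := by
    symm
    apply Finset.sum_subset
    · intro m hm
      rw [Finset.mem_range] at *
      omega
    · intro m hm hm'
      rw [Finset.mem_range] at hm hm'
      have : n - m < m := by omega
      rw [Nat.choose_eq_zero_of_lt this, mul_zero, zero_mul]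
  omega

lemma card_lt_pairs (k : ℕ) :
    ((univ : Finset (Fin k × Fin k)).filter (fun p => p.1 < p.2)).card = k.choose 2 := by
  rw [Finset.card_eq_sum_card_fiberwise (f := fun p => p.2) (t := univ) (fun _ _ => mem_univ _)]
  have h : ∀ j : Fin k, ((univ.filter (fun p : Fin k × Fin k => p.1 < p.2)).filter
      (fun p => p.2 = j)).card = (j : ℕ) := by
    intro j
    rw [← Fin.card_Iio (b := j)]
    apply Finset.card_bij (fun p _ => p.1)
    · intro p hp
      simp only [mem_filter, mem_univ, true_and] at hp
      simp [Finset.mem_Iio, hp.2 ▸ hp.1]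
    · intro p hp q hq hpq
      simp only [mem_filter, mem_univ, true_and] at hp hq
      exact Prod.ext hpq (hp.2.trans hq.2.symm)
    · intro i hi
      exact ⟨(i, j), by simp [Finset.mem_Iio.mp hi], rfl⟩
  simp_rw [h]
  rw [Nat.choose_two_right]
  rw [Fin.sum_univ_eq_sum_range (fun j => j)]
  rw [← Finset.sum_range_id_mul_two (k)]
  omega

theorem prob_two_boxes_equal (n k : ℕ) (hk : 3 ≤ k) :
    ((Finset.univ.filter (fun f : Fin n → Fin k => ∃ i j : Fin k, i ≠ j ∧
        (Finset.univ.filter (fun x : Fin n => f x = i)).card =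
          (Finset.univ.filter (fun x : Fin n => f x = j)).card)).card : ℚ) / (k : ℚ) ^ n ≤
      (k.choose 2 : ℚ) * (((k : ℚ) - 2) / (k : ℚ)) ^ n *
        ∑ j ∈ Finset.range (n / 2 + 1),
          ((n.choose j * (n - j).choose j : ℕ) : ℚ) / ((k : ℚ) - 2) ^ (2 * j) := by
  classical
  have hkQ : (3:ℚ) ≤ (k:ℚ) := by exact_mod_cast hk
  have hkpos : (0:ℚ) < (k:ℚ)^n := by positivity
  have hK2 : ((k - 2 : ℕ) : ℚ) = (k:ℚ) - 2 := by
    rw [Nat.cast_sub (by omega)]; norm_num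
  have hK2ne : ((k:ℚ) - 2) ≠ 0 := by linarith
  set B : ℕ := ∑ m ∈ Finset.range (n/2+1), n.choose m * (n-m).choose m * (k-2)^(n-2*m)
    with hB
  clear_value B
  -- Step 1: natural-number union bound
  have hE : (Finset.univ.filter (fun f : Fin n → Fin k => ∃ i j : Fin k, i ≠ j ∧
        (Finset.univ.filter (fun x : Fin n => f x = i)).card =
          (Finset.univ.filter (fun x : Fin n => f x = j)).card)).card ≤ k.choose 2 * B := by
    set P := (univ : Finset (Fin k × Fin k)).filter (fun p => p.1 < p.2) with hP
    have hsub : (Finset.univ.filter (fun f : Fin n → Fin k => ∃ i j : Fin k, i ≠ j ∧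
          (Finset.univ.filter (fun x : Fin n => f x = i)).card =
            (Finset.univ.filter (fun x : Fin n => f x = j)).card))
        ⊆ P.biUnion (fun p => univ.filter fun f : Fin n → Fin k =>
          (univ.filter (fun x => f x = p.1)).card = (univ.filter (fun x => f x = p.2)).card) := by
      intro f hf
      simp only [mem_filter, mem_univ, true_and] at hf
      obtain ⟨i, j, hij, hcard⟩ := hf
      rcases lt_or_gt_of_ne hij with h | h
      · exact mem_biUnion.mpr ⟨(i,j), by simp [hP, h], by simp [hcard]⟩
      · exact mem_biUnion.mpr ⟨(j,i), by simp [hP, h], by simp [hcard.symm]⟩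
    calc _ ≤ _ := Finset.card_le_card hsub
      _ ≤ ∑ p ∈ P, (univ.filter fun f : Fin n → Fin k =>
          (univ.filter (fun x => f x = p.1)).card
            = (univ.filter (fun x => f x = p.2)).card).card := Finset.card_biUnion_le
      _ ≤ ∑ _p ∈ P, B := by
          refine Finset.sum_le_sum (fun p hp => ?_)
          have : p.1 ≠ p.2 := ne_of_lt (mem_filter.mp hp).2
          exact hB ▸ pair_count hk p.1 p.2 this
      _ = P.card * B := by rw [Finset.sum_const, smul_eq_mul]
      _ = k.choose 2 * B := by rw [hP, card_lt_pairs]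
  -- Step 2: pass to ℚ
  have step : ((Finset.univ.filter (fun f : Fin n → Fin k => ∃ i j : Fin k, i ≠ j ∧
        (Finset.univ.filter (fun x : Fin n => f x = i)).card =
          (Finset.univ.filter (fun x : Fin n => f x = j)).card)).card : ℚ) / (k : ℚ) ^ n
      ≤ ((k.choose 2 * B : ℕ) : ℚ) / (k : ℚ) ^ n := by
    gcongr
  refine step.trans_eq ?_
  -- Step 3: algebraic identity
  have key : ∀ m ∈ Finset.range (n/2+1),
      ((n.choose m * (n-m).choose m * (k-2)^(n-2*m) : ℕ) : ℚ)
      = ((n.choose m * (n - m).choose m : ℕ) : ℚ) * (((k:ℚ)-2)^n / ((k:ℚ)-2)^(2*m)) := by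
    clear hE step
    intro m hm
    rw [Finset.mem_range] at hm
    have h2m : 2*m ≤ n := by omega
    have hp : ((k:ℚ)-2)^(n-2*m) = ((k:ℚ)-2)^n / ((k:ℚ)-2)^(2*m) := by
      rw [eq_div_iff (pow_ne_zero _ hK2ne), ← pow_add]
      congr 1; omega
    rw [Nat.cast_mul, Nat.cast_pow, hK2, hp]
  rw [hB, Nat.cast_mul, Nat.cast_sum]
  rw [Finset.sum_congr rfl key]
  rw [div_pow]
  have hpull : ∑ m ∈ Finset.range (n/2+1),
      ((n.choose m * (n - m).choose m : ℕ) : ℚ) * (((k:ℚ)-2)^n / ((k:ℚ)-2)^(2*m))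
      = ((k:ℚ)-2)^n * ∑ m ∈ Finset.range (n/2+1),
        ((n.choose m * (n - m).choose m : ℕ) : ℚ) / ((k:ℚ)-2)^(2*m) := by
    rw [Finset.mul_sum]
    exact Finset.sum_congr rfl (fun m _ => by ring)
  rw [hpull]
  ring
end

section
/- For fixed k ≥ 3, and φ(n) = √(n·ψ(n)) with ψ(n) → ∞ and φ(n) = o(n), the quantity (1 + kφ(n)/n)^(−2n/k − 2φ(n)) · (1 − (2k/(k−2))·φ(n)/n)^(−n + 2n/k + 2φ(n)) tends to 0 as n → ∞. -/
open Filter Real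

lemma aux_log_one_add {t : ℝ} (h0 : 0 ≤ t) (h1 : t ≤ 1/2) :
    t - t^2/2 - 2*t^3 ≤ Real.log (1+t) := by
  have habs : |(-t)| < 1 := by rw [abs_neg, abs_of_nonneg h0]; linarith
  have h := Real.abs_log_sub_add_sum_range_le habs 2
  rw [abs_le] at h
  have h' := h.1
  simp [Finset.sum_range_succ, abs_neg, abs_of_nonneg h0] at h'
  have hq : t^3 / (1-t) ≤ 2*t^3 := by
    rw [div_le_iff₀ (by linarith)]
    nlinarith [pow_nonneg h0 3]
  linarith

lemma aux_log_one_sub {t : ℝ} (h0 : 0 ≤ t) (h1 : t ≤ 1/2) :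
    -t - t^2/2 - 2*t^3 ≤ Real.log (1-t) := by
  have habs : |t| < 1 := by rw [abs_of_nonneg h0]; linarith
  have h := Real.abs_log_sub_add_sum_range_le habs 2
  rw [abs_le] at h
  have h' := h.1
  simp [Finset.sum_range_succ, abs_of_nonneg h0] at h'
  have hq : t^3 / (1-t) ≤ 2*t^3 := by
    rw [div_le_iff₀ (by linarith)]
    nlinarith [pow_nonneg h0 3]
  linarith

lemma key_ineq (k c d x : ℝ) (hk : 3 ≤ k) (hd : k*(1-d) = 2) (hcd : c*d = 2)
    (hc2 : 0 ≤ c) (hc6 : c ≤ 2*k) (hx : 0 ≤ x) (hxd : x ≤ 1/(46*k^2)) :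
    (k*x - (k*x)^2/2 - 2*(k*x)^3) * (-(1-d) - 2*x)
      + (-(c*x) - (c*x)^2/2 - 2*(c*x)^3) * (-d + 2*x) ≤ -(3/2)*x^2 := by
  have hkx : k^2 * x ≤ 1/46 := by
    rw [le_div_iff₀ (by norm_num : (0:ℝ) < 46)]
    calc k^2*x*46 = 46*k^2*x := by ring
    _ ≤ 46*k^2*(1/(46*k^2)) := by
        apply mul_le_mul_of_nonneg_left hxd; positivity
    _ = 1 := by field_simp
  have hck : 2 ≤ c := by nlinarith [hd, hcd]
  have expand : (k*x - (k*x)^2/2 - 2*(k*x)^3) * (-(1-d) - 2*x)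
      + (-(c*x) - (c*x)^2/2 - 2*(c*x)^3) * (-d + 2*x)
      = -(k+c)*x^2 + (5*k^2+3*c^2)*x^3 + 4*(k^3-c^3)*x^4 := by
    linear_combination (-x + (k*x^2)/2 + 2*k^2*x^3) * hd + (x + c*x^2/2 + 2*c^2*x^3) * hcd
  rw [expand]
  have hx2 : 0 ≤ x^2 := sq_nonneg x
  have h1 : (5*k^2+3*c^2)*x^3 ≤ 17*k^2*x*x^2 := by
    nlinarith [mul_nonneg (mul_nonneg (sub_nonneg.2 hc6) (by linarith : (0:ℝ) ≤ 2*k+c))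
      (mul_nonneg hx hx2)]
  have h2 : 4*(k^3-c^3)*x^4 ≤ 4*k^3*x^2*x^2 := by
    nlinarith [mul_nonneg (pow_nonneg hc2 3) (pow_nonneg hx 4)]
  have h3 : 17*k^2*x*x^2 ≤ (17/46)*x^2 := by nlinarith
  have hkx2 : (k^2*x)^2 ≤ (1/46)^2 := pow_le_pow_left₀ (by positivity) hkx 2
  have h4 : 4*k^3*x^2*x^2 ≤ x^2 := by
    nlinarith [mul_le_mul_of_nonneg_right hkx2 hx2,
      mul_nonneg (mul_nonneg (by linarith : (0:ℝ) ≤ k - 1) (pow_nonneg (by linarith : (0:ℝ) ≤ k) 3))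
        (pow_nonneg hx 4)]
  nlinarith [mul_nonneg (by linarith : (0:ℝ) ≤ k + c - 5) hx2]

set_option maxHeartbeats 1000000 in
lemma log_est (kR c d nn p f : ℝ) (hk3 : 3 ≤ kR) (hd2 : kR*(1-d) = 2) (hcd : c*d = 2)
    (hc0 : 0 ≤ c) (hc6 : c ≤ 2*kR) (hn : 0 < nn) (hp : 0 ≤ p) (hf : 0 ≤ f)
    (hsq : f * f = nn * p) (hxd : f / nn ≤ 1/(46*kR^2)) :
    (0 < 1 + kR * f / nn) ∧ (0 < 1 - c * f / nn) ∧
      (Real.log (1 + kR * f / nn) * (-(2*nn/kR) - 2*f)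
        + Real.log (1 - c * f / nn) * (-nn + 2*nn/kR + 2*f) ≤ -(3/2*p)) := by
  have hk0 : (0:ℝ) < kR := by linarith
  obtain ⟨x, hxx⟩ : ∃ x : ℝ, x = f / nn := ⟨_, rfl⟩
  rw [← hxx] at hxd
  have hx0 : 0 ≤ x := hxx ▸ div_nonneg hf hn.le
  have hnx : nn * x = f := by rw [hxx]; field_simp
  have hfx : f * x = p := by
    rw [hxx, ← mul_div_assoc, hsq, mul_comm nn p, mul_div_assoc, div_self hn.ne', mul_one]
  have harg1 : kR * f / nn = kR * x := by rw [hxx]; ring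
  have harg2 : c * f / nn = c * x := by rw [hxx]; ring
  have hk2x : kR^2 * x ≤ 1/46 := by
    rw [le_div_iff₀ (by norm_num : (0:ℝ) < 46)]
    calc kR^2*x*46 = 46*kR^2*x := by ring
    _ ≤ 46*kR^2*(1/(46*kR^2)) := by
        apply mul_le_mul_of_nonneg_left hxd; positivity
    _ = 1 := by field_simp
  have hkx : kR * x ≤ 1/2 := by nlinarith
  have hkxpos : 0 ≤ kR * x := by positivity
  have hcx : c * x ≤ 1/2 := by nlinarith [mul_le_mul_of_nonneg_right hc6 hx0]
  have hcxpos : 0 ≤ c * x := mul_nonneg hc0 hx0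
  have hb1 : (0:ℝ) < 1 + kR * f / nn := by rw [harg1]; linarith
  have hb2 : (0:ℝ) < 1 - c * f / nn := by rw [harg2]; linarith
  refine ⟨hb1, hb2, ?_⟩
  rw [harg1, harg2]
  have hlog1 := aux_log_one_add hkxpos hkx
  have hlog2 := aux_log_one_sub hcxpos hcx
  have ha0 : -(2 * nn / kR) - 2 * f ≤ 0 := by
    have : 0 ≤ 2 * nn / kR := by positivity
    linarith
  have hx8 : x ≤ 1/8 := by
    nlinarith [hk2x, mul_nonneg (mul_nonneg (by linarith : (0:ℝ) ≤ kR-3)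
      (by linarith : (0:ℝ) ≤ kR+3)) hx0]
  have hb0 : -nn + 2 * nn / kR + 2 * f ≤ 0 := by
    have h1 : 2 * nn / kR ≤ 2 * nn / 3 := by
      apply div_le_div_of_nonneg_left (by linarith) (by norm_num) hk3
    have h2 : 2 * f ≤ nn / 4 := by nlinarith [hnx]
    linarith
  have hA : Real.log (1 + kR * x) * (-(2 * nn / kR) - 2 * f)
      ≤ (kR*x - (kR*x)^2/2 - 2*(kR*x)^3) * (-(2 * nn / kR) - 2 * f) :=
    mul_le_mul_of_nonpos_right hlog1 ha0
  have hB : Real.log (1 - c * x) * (-nn + 2 * nn / kR + 2 * f)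
      ≤ (-(c*x) - (c*x)^2/2 - 2*(c*x)^3) * (-nn + 2 * nn / kR + 2 * f) :=
    mul_le_mul_of_nonpos_right hlog2 hb0
  have h1d : 1 - d = 2 / kR := by
    rw [eq_div_iff hk0.ne']; linarith [hd2]
  have hdeq : d = 1 - 2 / kR := by linarith [h1d]
  have hAco : -(2 * nn / kR) - 2 * f = nn * (-(1-d) - 2*x) := by
    rw [← hnx, h1d]; ring
  have hBco : -nn + 2 * nn / kR + 2 * f = nn * (-d + 2*x) := by
    rw [← hnx, hdeq]; ring
  have hkey := key_ineq kR c d x hk3 hd2 hcd hc0 hc6 hx0 hxd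
  have hmul := mul_le_mul_of_nonneg_left hkey hn.le
  have hfin : nn * (-(3/2)*x^2) = -(3/2 * p) := by
    rw [← hfx, ← hnx]; ring
  calc Real.log (1 + kR * x) * (-(2*nn/kR) - 2*f)
        + Real.log (1 - c * x) * (-nn + 2*nn/kR + 2*f)
      ≤ (kR*x - (kR*x)^2/2 - 2*(kR*x)^3) * (-(2 * nn / kR) - 2 * f)
        + (-(c*x) - (c*x)^2/2 - 2*(c*x)^3) * (-nn + 2 * nn / kR + 2 * f) :=
        add_le_add hA hB
  _ = nn * ((kR*x - (kR*x)^2/2 - 2*(kR*x)^3) * (-(1-d) - 2*x)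
        + (-(c*x) - (c*x)^2/2 - 2*(c*x)^3) * (-d + 2*x)) := by
        rw [hAco, hBco]; ring
  _ ≤ nn * (-(3/2)*x^2) := hmul
  _ = -(3/2 * p) := hfin

theorem exp_bound_tendsto_zero (k : ℕ) (hk : 3 ≤ k) (ψ : ℕ → ℝ)
    (hψ : Tendsto ψ atTop atTop)
    (φ : ℕ → ℝ) (hφ : ∀ n, φ n = Real.sqrt (n * ψ n))
    (hφo : Tendsto (fun n => φ n / n) atTop (nhds 0)) :
    Tendsto (fun n : ℕ =>
        (1 + k * φ n / n) ^ (-(2 * (n : ℝ) / k) - 2 * φ n) *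
          (1 - (2 * k / ((k : ℝ) - 2)) * φ n / n) ^ (-(n : ℝ) + 2 * (n : ℝ) / k + 2 * φ n))
      atTop (nhds 0) := by
  have hk3 : (3:ℝ) ≤ (k:ℝ) := by exact_mod_cast hk
  have hk0 : (0:ℝ) < (k:ℝ) := by linarith
  have hkm2 : (1:ℝ) ≤ (k:ℝ) - 2 := by linarith
  have hc0 : (0:ℝ) ≤ 2 * (k:ℝ) / ((k:ℝ) - 2) := by positivity
  have hc6 : 2 * (k:ℝ) / ((k:ℝ) - 2) ≤ 2 * (k:ℝ) := by
    rw [div_le_iff₀ (by linarith)]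
    nlinarith
  have hd2 : (k:ℝ) * (1 - (1 - 2/(k:ℝ))) = 2 := by field_simp; ring
  have hcd : (2 * (k:ℝ) / ((k:ℝ) - 2)) * (1 - 2/(k:ℝ)) = 2 := by
    field_simp
  let L : ℕ → ℝ := fun n =>
    Real.log (1 + (k:ℝ) * φ n / n) * (-(2 * (n:ℝ) / (k:ℝ)) - 2 * φ n)
      + Real.log (1 - (2 * (k:ℝ) / ((k:ℝ) - 2)) * φ n / n) * (-(n:ℝ) + 2 * (n:ℝ) / (k:ℝ) + 2 * φ n)
  have E1 : ∀ᶠ n : ℕ in atTop, 0 < (n:ℝ) := by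
    filter_upwards [eventually_ge_atTop 1] with n hn
    exact_mod_cast Nat.lt_of_lt_of_le Nat.zero_lt_one hn
  have E2 : ∀ᶠ n : ℕ in atTop, 0 ≤ ψ n := hψ.eventually_ge_atTop 0
  have E3 : ∀ᶠ n : ℕ in atTop, φ n / n < 1/(46*(k:ℝ)^2) :=
    hφo.eventually_lt_const (by positivity)
  have Emain : ∀ᶠ n : ℕ in atTop,
      ((1 + (k:ℝ) * φ n / n) ^ (-(2 * (n:ℝ) / (k:ℝ)) - 2 * φ n) *
        (1 - (2 * (k:ℝ) / ((k:ℝ) - 2)) * φ n / n) ^ (-(n:ℝ) + 2 * (n:ℝ) / (k:ℝ) + 2 * φ n)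
        = Real.exp (L n)) ∧ L n ≤ -(3/2 * ψ n) := by
    filter_upwards [E1, E2, E3] with n hn hpsn hxlt
    have hφn : 0 ≤ φ n := by rw [hφ n]; exact Real.sqrt_nonneg _
    have hsq : φ n * φ n = (n:ℝ) * ψ n := by
      rw [hφ n]; exact Real.mul_self_sqrt (mul_nonneg hn.le hpsn)
    obtain ⟨hb1, hb2, hle⟩ := log_est (k:ℝ) (2 * (k:ℝ) / ((k:ℝ) - 2)) (1 - 2/(k:ℝ))
      (n:ℝ) (ψ n) (φ n) hk3 hd2 hcd hc0 hc6 hn hpsn hφn hsq hxlt.le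
    refine ⟨?_, hle⟩
    rw [Real.rpow_def_of_pos hb1, Real.rpow_def_of_pos hb2, ← Real.exp_add]
  have hbot : Tendsto L atTop atBot := by
    apply tendsto_atBot_mono' atTop (Emain.mono fun n h => h.2)
    exact tendsto_neg_atTop_atBot.comp (hψ.const_mul_atTop (by norm_num : (0:ℝ) < 3/2))
  have hexp : Tendsto (fun n => Real.exp (L n)) atTop (nhds 0) :=
    Real.tendsto_exp_atBot.comp hbot
  exact hexp.congr' (Emain.mono fun n h => h.1.symm)
end
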